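/- Let n ≥ 1 and κ ≥ 1 be integers. There is a constant C = C(n,κ) such that the following holds. Let g ∈ L¹(ℝⁿ) be supported in the closed ball B(c,ρ) with vanishing moments up to order κ−1 (∫ g(y) y^γ dy = 0 for |γ| ≤ κ−1). Let A > 0, λ > 0, and let φ : ℝⁿ → ℂ be κ times continuously differentiable with ‖∂^α φ‖_{L^∞} ≤ A λ^{|α|} for every multi-index |α| ≤ κ. Then for every u ∈ ℝⁿ with |u| ≥ λ, |∫_{ℝⁿ} e^{i u·y} φ(y) g(y) dy| ≤ C A (ρ |u|)^κ ‖g‖_{L¹}. -/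

import Mathlib

/-!
STATEMENT 3: Oscillatory-integral estimate via vanishing moments. If `g` is
supported in `B(c,ρ)` with vanishing moments up to order `κ−1`, and
`‖∂^α φ‖_∞ ≤ A λ^{|α|}` for `|α| ≤ κ`, then for `|u| ≥ λ`,
`|∫ e^{iu·y} φ(y) g(y) dy| ≤ C A (ρ|u|)^κ ‖g‖_{L¹}`.
-/

open MeasureTheory



open MeasureTheory Finset

section OscAuxiliary


lemma integrable_mul_cont {n : ℕ} {g : EuclideanSpace ℝ (Fin n) → ℂ} {c : EuclideanSpace ℝ (Fin n)} {ρ : ℝ}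
    (hg : Integrable g) (hsupp : Function.support g ⊆ Metric.closedBall c ρ)
    {q : EuclideanSpace ℝ (Fin n) → ℂ} (hq : Continuous q) :
    Integrable (fun y => q y * g y) := by
  obtain ⟨M, hM⟩ := (isCompact_closedBall c ρ).exists_bound_of_continuousOn hq.continuousOn
  refine (hg.norm.const_mul M).mono' (hq.aestronglyMeasurable.mul hg.aestronglyMeasurable) ?_
  refine Filter.Eventually.of_forall fun y => ?_
  by_cases hy : g y = 0
  · simp [hy]
  · have h1 : ‖q y‖ ≤ M := hM y (hsupp (Function.mem_support.mpr hy))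
    rw [norm_mul]
    exact mul_le_mul_of_nonneg_right h1 (norm_nonneg _)

lemma coord_continuous {n : ℕ} (i : Fin n) : Continuous (fun y : EuclideanSpace ℝ (Fin n) => y i) :=
  (EuclideanSpace.proj i : EuclideanSpace ℝ (Fin n) →L[ℝ] ℝ).continuous

lemma moment_vanish {n κ : ℕ} {g : EuclideanSpace ℝ (Fin n) → ℂ} {c : EuclideanSpace ℝ (Fin n)} {ρ : ℝ}
    (hg : Integrable g) (hsupp : Function.support g ⊆ Metric.closedBall c ρ)
    (hmom : ∀ γ : Fin n → ℕ, (∑ i, γ i) ≤ κ - 1 →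
      ∫ y, g y * ∏ i, (y i : ℂ) ^ (γ i) = 0)
    {k : ℕ} (hk : k ≤ κ - 1)
    (m : ContinuousMultilinearMap ℝ (fun _ : Fin k => EuclideanSpace ℝ (Fin n)) ℂ) :
    ∫ y, m (fun _ => y - c) * g y = 0 := by
  classical
  -- Step 0: pure monomial integrals vanish
  have hmono : ∀ (r : Fin k → Fin n) (T : Finset (Fin k)),
      ∫ y, (∏ j ∈ T, ((y : EuclideanSpace ℝ (Fin n)) (r j) : ℂ)) * g y = 0 := by
    intro r T
    set γ : Fin n → ℕ := fun i => #{a ∈ T | r a = i} with hγ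
    have hptw : ∀ y : EuclideanSpace ℝ (Fin n),
        (∏ j ∈ T, ((y (r j) : ℂ))) = ∏ i, (y i : ℂ) ^ (γ i) := by
      intro y
      rw [Finset.prod_comp (fun i => (y i : ℂ)) r]
      refine Finset.prod_subset (Finset.subset_univ _) fun i _ hi => ?_
      have h0 : #{a ∈ T | r a = i} = 0 := by
        rw [Finset.card_eq_zero, Finset.filter_eq_empty_iff]
        exact fun {x} hx hxi => hi (Finset.mem_image.mpr ⟨x, hx, hxi⟩)
      simp [h0]
    have hcard : (∑ i, γ i) ≤ κ - 1 := by
      have h1 : T.card = ∑ i, γ i :=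
        Finset.card_eq_sum_card_fiberwise (fun x _ => Finset.mem_univ (r x))
      have h2 : T.card ≤ k := le_trans (Finset.card_le_card (Finset.subset_univ _)) (by simp)
      omega
    have := hmom γ hcard
    simp_rw [hptw]
    simpa [mul_comm] using this
  -- Step 1: product over shifted coordinates vanishes
  have key : ∀ r : Fin k → Fin n,
      (∫ y, (∏ j, (((y : EuclideanSpace ℝ (Fin n)) (r j) : ℂ) - (c (r j) : ℂ))) * g y) = 0 := by
    intro r
    have hprod : ∀ y : EuclideanSpace ℝ (Fin n),
        (∏ j, ((y (r j) : ℂ) - (c (r j) : ℂ)))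
          = ∑ T : Finset (Fin k), (∏ j ∈ T, (y (r j) : ℂ)) * ∏ j ∈ Tᶜ, (-(c (r j) : ℂ)) := by
      intro y
      rw [← Fintype.prod_add]
      exact Finset.prod_congr rfl fun j _ => by ring
    calc (∫ y, (∏ j, (((y : EuclideanSpace ℝ (Fin n)) (r j) : ℂ) - (c (r j) : ℂ))) * g y)
        = ∫ y, ∑ T : Finset (Fin k),
            (∏ j ∈ Tᶜ, (-(c (r j) : ℂ))) * ((∏ j ∈ T, ((y : EuclideanSpace ℝ (Fin n)) (r j) : ℂ)) * g y) := by
          congr 1; funext y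
          rw [hprod y, Finset.sum_mul]
          exact Finset.sum_congr rfl fun T _ => by ring
      _ = ∑ T : Finset (Fin k), ∫ y,
            (∏ j ∈ Tᶜ, (-(c (r j) : ℂ))) * ((∏ j ∈ T, ((y : EuclideanSpace ℝ (Fin n)) (r j) : ℂ)) * g y) := by
          refine integral_finset_sum _ fun T _ => ?_
          refine Integrable.const_mul ?_ _
          refine integrable_mul_cont hg hsupp ?_
          exact continuous_finset_prod _ fun j _ =>
            Complex.continuous_ofReal.comp (coord_continuous (r j))
      _ = 0 := by
          refine Finset.sum_eq_zero fun T _ => ?_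
          rw [integral_const_mul, hmono r T, mul_zero]
  -- Step 2: expand the multilinear map over the basis
  have hexp : ∀ y : EuclideanSpace ℝ (Fin n), m (fun _ => y - c)
      = ∑ r : Fin k → Fin n, (∏ j, ((y (r j) : ℂ) - (c (r j) : ℂ)))
          * m (fun j => EuclideanSpace.single (r j) (1 : ℝ)) := by
    intro y
    have hyc : y - c = ∑ i, (y i - c i) • EuclideanSpace.single i (1 : ℝ) := by
      have := (EuclideanSpace.basisFun (Fin n) ℝ).sum_repr (y - c)
      simp only [EuclideanSpace.basisFun_repr, EuclideanSpace.basisFun_apply] at this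
      rw [← this]
      exact Finset.sum_congr rfl fun i _ => by simp
    have hbasis : (fun _ : Fin k => y - c)
        = fun _ : Fin k => ∑ i, (y i - c i) • EuclideanSpace.single i (1 : ℝ) :=
      funext fun _ => hyc
    rw [hbasis, m.map_sum]
    refine Finset.sum_congr rfl fun r _ => ?_
    rw [m.map_smul_univ]
    rw [Complex.real_smul]
    push_cast
    ring
  calc ∫ y, m (fun _ => y - c) * g y
      = ∫ y, ∑ r : Fin k → Fin n, m (fun j => EuclideanSpace.single (r j) (1 : ℝ))
          * ((∏ j, (((y : EuclideanSpace ℝ (Fin n)) (r j) : ℂ) - (c (r j) : ℂ))) * g y) := by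
        congr 1; funext y
        rw [hexp y, Finset.sum_mul]
        exact Finset.sum_congr rfl fun r _ => by ring
    _ = ∑ r : Fin k → Fin n, ∫ y, m (fun j => EuclideanSpace.single (r j) (1 : ℝ))
          * ((∏ j, (((y : EuclideanSpace ℝ (Fin n)) (r j) : ℂ) - (c (r j) : ℂ))) * g y) := by
        refine integral_finset_sum _ fun r _ => ?_
        refine Integrable.const_mul ?_ _
        refine integrable_mul_cont hg hsupp ?_
        exact continuous_finset_prod _ fun j _ =>
          (Complex.continuous_ofReal.comp (coord_continuous (r j))).sub continuous_const
    _ = 0 := by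
        refine Finset.sum_eq_zero fun r _ => ?_
        rw [integral_const_mul, key r, mul_zero]

lemma iterWithin_eq {F : ℝ → ℂ} {N : ℕ} (hF : ContDiff ℝ (N : ℕ) F) {m : ℕ} (hm : m ≤ N)
    {s : Set ℝ} (hs : UniqueDiffOn ℝ s) {x : ℝ} (hx : x ∈ s) :
    iteratedDerivWithin m F s x = iteratedDeriv m F x := by
  rw [iteratedDerivWithin_eq_iteratedFDerivWithin, iteratedDeriv_eq_iteratedFDeriv]
  congr 1
  have hF' : ContDiff ℝ (N : ℕ∞) F := by exact_mod_cast hF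
  have h := (contDiff_iff_ftaylorSeries.mp hF').hasFTaylorSeriesUpToOn s
  exact (h.eq_iteratedFDerivWithin_of_uniqueDiffOn (by exact_mod_cast hm) hs hx).symm



lemma line_iteratedDeriv {E F : Type*} [NormedAddCommGroup E] [NormedSpace ℝ E]
    [NormedAddCommGroup F] [NormedSpace ℝ F]
    {N : ℕ} {f : E → F} (hf : ContDiff ℝ (N : ℕ) f) (c v : E) :
    ∀ k, k ≤ N → ∀ t : ℝ, iteratedDeriv k (fun s => f (c + s • v)) t
      = iteratedFDeriv ℝ k f (c + t • v) (fun _ => v) := by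
  intro k
  induction k with
  | zero => intro _ t; simp
  | succ k IH =>
    intro hk t
    have hkN : k < N := Nat.lt_of_succ_le hk
    rw [iteratedDeriv_succ]
    have hfun : (deriv (iteratedDeriv k fun s => f (c + s • v))) t
        = deriv (fun s => (ContinuousMultilinearMap.apply ℝ (fun _ : Fin k => E) F (fun _ => v))
            (iteratedFDeriv ℝ k f (c + s • v))) t := by
      apply Filter.EventuallyEq.deriv_eq
      refine Filter.Eventually.of_forall fun s => ?_
      exact IH (le_of_lt hkN) s
    rw [hfun]
    have hγ : HasDerivAt (fun s : ℝ => c + s • v) v t := by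
      simpa using ((hasDerivAt_id t).smul_const v).const_add c
    have hG : HasFDerivAt (iteratedFDeriv ℝ k f)
        (fderiv ℝ (iteratedFDeriv ℝ k f) (c + t • v)) (c + t • v) :=
      (hf.differentiable_iteratedFDeriv (by exact_mod_cast hkN) (c + t • v)).hasFDerivAt
    have hcomp : HasDerivAt (fun s => iteratedFDeriv ℝ k f (c + s • v))
        (fderiv ℝ (iteratedFDeriv ℝ k f) (c + t • v) v) t := hG.comp_hasDerivAt t hγ
    have happ := ((ContinuousMultilinearMap.apply ℝ (fun _ : Fin k => E) F
        (fun _ => v)).hasFDerivAt.comp_hasDerivAt t hcomp)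
    rw [show (fun s => (ContinuousMultilinearMap.apply ℝ (fun _ : Fin k => E) F (fun _ => v))
            (iteratedFDeriv ℝ k f (c + s • v)))
        = (⇑(ContinuousMultilinearMap.apply ℝ (fun _ : Fin k => E) F fun _ => v)
            ∘ fun s => iteratedFDeriv ℝ k f (c + s • v)) from rfl, happ.deriv]
    rw [iteratedFDeriv_succ_apply_left]
    rfl



lemma iteratedDeriv_wfun (j : ℕ) (t : ℝ) :
    iteratedDeriv j (fun t : ℝ => Complex.exp (Complex.I * t)) t
      = Complex.I ^ j * Complex.exp (Complex.I * t) := by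
  induction j generalizing t with
  | zero => simp
  | succ j IH =>
    rw [iteratedDeriv_succ]
    have h1 : deriv (iteratedDeriv j fun t : ℝ => Complex.exp (Complex.I * t)) t
        = deriv (fun t : ℝ => Complex.I ^ j * Complex.exp (Complex.I * t)) t := by
      apply Filter.EventuallyEq.deriv_eq
      exact Filter.Eventually.of_forall fun s => IH s
    rw [h1]
    have h2 : HasDerivAt (fun t : ℝ => Complex.I * (t : ℂ)) Complex.I t := by
      simpa using (Complex.ofRealCLM.hasDerivAt (x := t)).const_mul Complex.I
    have h3 := (h2.cexp.const_mul (Complex.I ^ j)).deriv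
    rw [h3]; ring

lemma contDiff_wfun : ContDiff ℝ (⊤ : ℕ∞) (fun t : ℝ => Complex.exp (Complex.I * t)) := by
  exact Complex.contDiff_exp.comp (contDiff_const.mul Complex.ofRealCLM.contDiff)

lemma exp_inner_eq {n : ℕ} (u : EuclideanSpace ℝ (Fin n)) :
    (fun y : EuclideanSpace ℝ (Fin n) => Complex.exp (Complex.I * ((inner ℝ u y : ℝ) : ℂ)))
      = (fun t : ℝ => Complex.exp (Complex.I * t)) ∘ (innerSL ℝ u) := by
  funext y; simp [innerSL_apply_apply]

lemma exp_inner_iteratedFDeriv_le {n : ℕ} (u : EuclideanSpace ℝ (Fin n)) (j : ℕ)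
    (y : EuclideanSpace ℝ (Fin n)) :
    ‖iteratedFDeriv ℝ j
        (fun y : EuclideanSpace ℝ (Fin n) => Complex.exp (Complex.I * ((inner ℝ u y : ℝ) : ℂ))) y‖
      ≤ ‖u‖ ^ j := by
  rw [exp_inner_eq u]
  rw [(innerSL ℝ u).iteratedFDeriv_comp_right (contDiff_wfun.of_le (by exact_mod_cast le_top)) y le_rfl]
  refine le_trans (ContinuousMultilinearMap.norm_compContinuousLinearMap_le _ _) ?_
  have h1 : ‖iteratedFDeriv ℝ j (fun t : ℝ => Complex.exp (Complex.I * t)) ((innerSL ℝ u) y)‖ = 1 := by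
    rw [norm_iteratedFDeriv_eq_norm_iteratedDeriv, iteratedDeriv_wfun]
    simp [Complex.norm_exp]
  rw [h1, one_mul]
  calc ∏ _i : Fin j, ‖innerSL ℝ u‖ = ‖innerSL ℝ u‖ ^ j := by simp
    _ ≤ ‖u‖ ^ j := by rw [innerSL_apply_norm]

lemma h_deriv_bound {n κ : ℕ} {A lam : ℝ} (hA : 0 < A) (hlam : 0 < lam)
    {φ : EuclideanSpace ℝ (Fin n) → ℂ} (hφ : ContDiff ℝ (κ : ℕ) φ)
    (hφb : ∀ j ≤ κ, ∀ y, ‖iteratedFDeriv ℝ j φ y‖ ≤ A * lam ^ j)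
    {u : EuclideanSpace ℝ (Fin n)} (hu : lam ≤ ‖u‖) {k : ℕ} (hkκ : k ≤ κ)
    (y : EuclideanSpace ℝ (Fin n)) :
    ‖iteratedFDeriv ℝ k
        (fun y => Complex.exp (Complex.I * ((inner ℝ u y : ℝ) : ℂ)) * φ y) y‖
      ≤ 2 ^ k * A * ‖u‖ ^ k := by
  have hu0 : (0:ℝ) ≤ ‖u‖ := norm_nonneg _
  have he : ContDiff ℝ (κ : ℕ)
      (fun y : EuclideanSpace ℝ (Fin n) => Complex.exp (Complex.I * ((inner ℝ u y : ℝ) : ℂ))) := by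
    rw [exp_inner_eq u]
    exact (contDiff_wfun.of_le (by exact_mod_cast le_top)).comp (innerSL ℝ u).contDiff
  refine le_trans (norm_iteratedFDeriv_mul_le he hφ y (by exact_mod_cast hkκ)) ?_
  have hstep : ∀ i ∈ Finset.range (k+1),
      (k.choose i : ℝ) * ‖iteratedFDeriv ℝ i
          (fun y : EuclideanSpace ℝ (Fin n) => Complex.exp (Complex.I * ((inner ℝ u y : ℝ) : ℂ))) y‖
        * ‖iteratedFDeriv ℝ (k-i) φ y‖
      ≤ (k.choose i : ℝ) * (A * ‖u‖ ^ k) := by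
    intro i hi
    have hik : i ≤ k := Nat.lt_succ_iff.mp (Finset.mem_range.mp hi)
    have h1 := exp_inner_iteratedFDeriv_le u i y
    have h2 : ‖iteratedFDeriv ℝ (k-i) φ y‖ ≤ A * ‖u‖ ^ (k-i) := by
      refine le_trans (hφb (k-i) (le_trans (Nat.sub_le _ _) hkκ) y) ?_
      exact mul_le_mul_of_nonneg_left (pow_le_pow_left₀ hlam.le hu _) hA.le
    calc (k.choose i : ℝ) * ‖iteratedFDeriv ℝ i _ y‖ * ‖iteratedFDeriv ℝ (k-i) φ y‖
        ≤ (k.choose i : ℝ) * ‖u‖ ^ i * (A * ‖u‖ ^ (k-i)) := by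
          refine mul_le_mul (mul_le_mul_of_nonneg_left h1 (by positivity)) h2 (norm_nonneg _) ?_
          positivity
      _ = (k.choose i : ℝ) * (A * ‖u‖ ^ k) := by
          have : ‖u‖ ^ i * ‖u‖ ^ (k - i) = ‖u‖ ^ k := by
            rw [← pow_add ‖u‖ i (k - i), Nat.add_sub_cancel' hik]
          calc (k.choose i : ℝ) * ‖u‖ ^ i * (A * ‖u‖ ^ (k - i))
              = (k.choose i : ℝ) * (A * (‖u‖ ^ i * ‖u‖ ^ (k-i))) := by ring
            _ = (k.choose i : ℝ) * (A * ‖u‖ ^ k) := by rw [this]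
  refine le_trans (Finset.sum_le_sum hstep) ?_
  rw [← Finset.sum_mul]
  have : (∑ i ∈ Finset.range (k+1), (k.choose i : ℝ)) = 2 ^ k := by
    rw [← Nat.cast_sum]
    norm_cast
    exact Nat.sum_range_choose k
  rw [this]; ring_nf; rfl

end OscAuxiliary

theorem oscillatory_moment_estimate (n κ : ℕ) (hn : 1 ≤ n) (hκ : 1 ≤ κ) :
    ∃ C : ℝ, 0 < C ∧
      ∀ (g : EuclideanSpace ℝ (Fin n) → ℂ) (c : EuclideanSpace ℝ (Fin n)) (ρ : ℝ),
        0 ≤ ρ → Integrable g →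
        Function.support g ⊆ Metric.closedBall c ρ →
        (∀ γ : Fin n → ℕ, (∑ i, γ i) ≤ κ - 1 →
          ∫ y, g y * ∏ i, (y i : ℂ) ^ (γ i) = 0) →
        ∀ (A lam : ℝ), 0 < A → 0 < lam →
        ∀ φ : EuclideanSpace ℝ (Fin n) → ℂ, ContDiff ℝ κ φ →
        (∀ j ≤ κ, ∀ y, ‖iteratedFDeriv ℝ j φ y‖ ≤ A * lam ^ j) →
        ∀ u : EuclideanSpace ℝ (Fin n), lam ≤ ‖u‖ →
        ‖∫ y, Complex.exp (Complex.I * ((inner ℝ u y : ℝ) : ℂ)) * φ y * g y‖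
          ≤ C * A * (ρ * ‖u‖) ^ κ * ∫ y, ‖g y‖ := by
  refine ⟨2 ^ κ, by positivity, ?_⟩
  intro g c ρ hρ hg hsupp hmom A lam hA hlam φ hφ hφb u hu
  have hu0 : (0:ℝ) < ‖u‖ := lt_of_lt_of_le hlam hu
  set h : EuclideanSpace ℝ (Fin n) → ℂ :=
    fun y => Complex.exp (Complex.I * ((inner ℝ u y : ℝ) : ℂ)) * φ y with hh
  have hcd : ContDiff ℝ (κ : ℕ) h := by
    have he : ContDiff ℝ (κ : ℕ)
        (fun y : EuclideanSpace ℝ (Fin n) => Complex.exp (Complex.I * ((inner ℝ u y : ℝ) : ℂ))) := by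
      rw [exp_inner_eq u]
      exact (contDiff_wfun.of_le (by exact_mod_cast le_top)).comp (innerSL ℝ u).contDiff
    exact he.mul hφ
  set M : ℝ := 2 ^ κ * A * ‖u‖ ^ κ with hM
  have hMpos : 0 < M := by positivity
  have hMb : ∀ z, ‖iteratedFDeriv ℝ κ h z‖ ≤ M :=
    fun z => h_deriv_bound hA hlam hφ hφb hu le_rfl z
  set P : EuclideanSpace ℝ (Fin n) → ℂ :=
    fun y => ∑ k ∈ Finset.range κ, ((Nat.factorial k : ℕ) : ℝ)⁻¹ • (iteratedFDeriv ℝ k h c (fun _ => y - c)) with hP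
  -- Taylor estimate on the ball
  have htaylor : ∀ y ∈ Metric.closedBall c ρ, ‖h y - P y‖ ≤ M * ρ ^ κ := by
    intro y hy
    set v : EuclideanSpace ℝ (Fin n) := y - c with hv
    have hvρ : ‖v‖ ≤ ρ := by
      rw [hv]; exact mem_closedBall_iff_norm.mp hy
    set F : ℝ → ℂ := fun t => h (c + t • v) with hF
    have hFc : ContDiff ℝ (κ : ℕ) F := by
      refine hcd.comp ?_
      exact contDiff_const.add (contDiff_id.smul contDiff_const)
    have hκ1 : κ - 1 + 1 = κ := Nat.succ_pred_eq_of_pos hκ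
    have hbd : ∀ t ∈ Set.Icc (0:ℝ) 1,
        ‖iteratedDerivWithin (κ - 1 + 1) F (Set.Icc 0 1) t‖ ≤ M * ρ ^ κ := by
      intro t ht
      rw [hκ1, iterWithin_eq hFc le_rfl (uniqueDiffOn_Icc zero_lt_one) ht,
        line_iteratedDeriv hcd c v κ le_rfl t]
      refine le_trans ((iteratedFDeriv ℝ κ h (c + t • v)).le_opNorm _) ?_
      have : (∏ _i : Fin κ, ‖v‖) = ‖v‖ ^ κ := by simp
      rw [this]
      exact mul_le_mul (hMb _) (pow_le_pow_left₀ (norm_nonneg _) hvρ _)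
        (by positivity) hMpos.le
    have hT := taylor_mean_remainder_bound (f := F) (a := 0) (b := 1) (x := 1)
      (n := κ - 1) zero_le_one
      (by
        have := hFc.contDiffOn (s := Set.Icc (0:ℝ) 1)
        rw [← hκ1] at this
        exact_mod_cast this)
      (Set.mem_Icc.mpr ⟨zero_le_one, le_rfl⟩) hbd
    have hF1 : F 1 = h y := by
      rw [hF]; simp [hv]
    have hTP : taylorWithinEval F (κ - 1) (Set.Icc 0 1) 0 1 = P y := by
      rw [taylor_within_apply, hP, hκ1]
      refine Finset.sum_congr rfl fun k hk => ?_
      have hkκ' : k ≤ κ := le_of_lt (Finset.mem_range.mp hk)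
      rw [iterWithin_eq hFc hkκ' (uniqueDiffOn_Icc zero_lt_one)
          (Set.mem_Icc.mpr ⟨le_rfl, zero_le_one⟩),
        line_iteratedDeriv hcd c v k hkκ' 0]
      simp [hv]
    rw [hF1, hTP] at hT
    refine le_trans hT ?_
    have hfac : (1:ℝ) ≤ ((Nat.factorial (κ - 1) : ℕ) : ℝ) := by
      exact_mod_cast Nat.one_le_iff_ne_zero.mpr (Nat.factorial_pos (κ-1)).ne'
    calc M * ρ ^ κ * (1 - 0) ^ (κ - 1 + 1) / ((Nat.factorial (κ-1) : ℕ) : ℝ)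
        = M * ρ ^ κ / ((Nat.factorial (κ-1) : ℕ) : ℝ) := by norm_num
      _ ≤ M * ρ ^ κ := div_le_self (by positivity) hfac
  -- continuity of P and integrability
  have hPcont : Continuous P := by
    refine continuous_finset_sum _ fun k _ => Continuous.fun_const_smul ?_ _
    exact (iteratedFDeriv ℝ k h c).cont.comp
      (continuous_pi fun _ => continuous_id.sub continuous_const)
  have hIhg : Integrable (fun y => h y * g y) := integrable_mul_cont hg hsupp hcd.continuous
  have hIPg : Integrable (fun y => P y * g y) := integrable_mul_cont hg hsupp hPcont
  -- vanishing of the polynomial part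
  have hPg0 : ∫ y, P y * g y = 0 := by
    have hrw : (fun y => P y * g y) = fun y =>
        ∑ k ∈ Finset.range κ, ((Nat.factorial k : ℕ) : ℝ)⁻¹ •
          ((iteratedFDeriv ℝ k h c (fun _ => y - c)) * g y) := by
      funext y
      rw [hP, Finset.sum_mul]
      exact Finset.sum_congr rfl fun k _ => smul_mul_assoc _ _ _
    rw [hrw, integral_finset_sum]
    · refine Finset.sum_eq_zero fun k hk => ?_
      rw [integral_smul, moment_vanish hg hsupp hmom
        (by have := Finset.mem_range.mp hk; omega) (iteratedFDeriv ℝ k h c), smul_zero]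
    · intro k _
      refine Integrable.fun_smul _ ?_
      refine integrable_mul_cont hg hsupp ?_
      exact (iteratedFDeriv ℝ k h c).cont.comp
        (continuous_pi fun _ => continuous_id.sub continuous_const)
  -- conclusion
  have hsplit : ∫ y, h y * g y = ∫ y, (h y - P y) * g y := by
    have : (fun y => (h y - P y) * g y) = fun y => h y * g y - P y * g y :=
      funext fun y => by ring
    rw [this, integral_sub hIhg hIPg, hPg0, sub_zero]
  have hbound : ‖∫ y, (h y - P y) * g y‖ ≤ (M * ρ ^ κ) * ∫ y, ‖g y‖ := by
    rw [← integral_const_mul]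
    refine norm_integral_le_of_norm_le ((hg.norm).const_mul _) ?_
    refine Filter.Eventually.of_forall fun y => ?_
    by_cases hy : g y = 0
    · simp [hy]
    · rw [norm_mul]
      exact mul_le_mul_of_nonneg_right (htaylor y (hsupp (Function.mem_support.mpr hy)))
        (norm_nonneg _)
  calc ‖∫ y, h y * g y‖ = ‖∫ y, (h y - P y) * g y‖ := by rw [hsplit]
    _ ≤ (M * ρ ^ κ) * ∫ y, ‖g y‖ := hbound
    _ = 2 ^ κ * A * (ρ * ‖u‖) ^ κ * ∫ y, ‖g y‖ := by
        rw [hM, mul_pow]; ring
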